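/- Let (P, L) be a finite projective plane of order q with point-line membership relation ∈, let σ : P ≃ L be a bijection, and let T ⊆ P × P × P satisfy: (i) for u, v ∈ P there exists w with (u,v,w) ∈ T iff v ∈ σ(u); (ii) (u,v,w) ∈ T implies (v,w,u) ∈ T; (iii) (u,v,w₁),(u,v,w₂) ∈ T imply w₁ = w₂; (iv) (u₁,v,w),(u₂,v,w) ∈ T imply u₁ = u₂. Let 𝕜 be a field of prime characteristic p with q ≡ 1 (mod p), let V := P → 𝕜 with standard basis (e_u), and let Ř : V ⊗[𝕜] V → V ⊗[𝕜] V be the 𝕜-linear map defined on basis vectors by: Ř(e_u ⊗ e_v) = ∑ over pairs (z,w) ∈ P × P with (z,w) ≠ (u,v) and ∃ s ∈ P, (u,v,s) ∈ T ∧ (z,w,s) ∈ T, of e_z ⊗ e_w, whenever v ∈ σ(u); and Ř(e_u ⊗ e_v) = −(e_u ⊗ e_v) whenever v ∉ σ(u). Then Ř is involutive: Ř ∘ Ř = id on V ⊗[𝕜] V. -/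

import Mathlib

open scoped TensorProduct Classical

theorem stmt_12 (P L : Type*) [Fintype P] [Fintype L] [DecidableEq P] [Membership P L]
    [Configuration.ProjectivePlane P L] (q : ℕ)
    (hq : Configuration.ProjectivePlane.order P L = q)
    (σ : P ≃ L) (T : Set (P × P × P))
    (hi : ∀ u v : P, (∃ w, (u, v, w) ∈ T) ↔ v ∈ σ u)
    (hii : ∀ u v w, (u, v, w) ∈ T → (v, w, u) ∈ T)
    (hiii : ∀ u v w₁ w₂, (u, v, w₁) ∈ T → (u, v, w₂) ∈ T → w₁ = w₂)
    (hiv : ∀ u₁ u₂ v w, (u₁, v, w) ∈ T → (u₂, v, w) ∈ T → u₁ = u₂)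
    (𝕜 : Type*) [Field 𝕜] (p : ℕ) (hp : p.Prime) [CharP 𝕜 p] (hqp : q ≡ 1 [MOD p])
    (Rc : (P → 𝕜) ⊗[𝕜] (P → 𝕜) →ₗ[𝕜] (P → 𝕜) ⊗[𝕜] (P → 𝕜))
    (hRc₁ : ∀ u v : P, v ∈ σ u →
      Rc (Pi.single u (1 : 𝕜) ⊗ₜ[𝕜] Pi.single v (1 : 𝕜)) =
        ∑ zw : P × P,
          if zw ≠ (u, v) ∧ ∃ s, (u, v, s) ∈ T ∧ (zw.1, zw.2, s) ∈ T then
            Pi.single zw.1 (1 : 𝕜) ⊗ₜ[𝕜] Pi.single zw.2 (1 : 𝕜)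
          else 0)
    (hRc₂ : ∀ u v : P, v ∉ σ u →
      Rc (Pi.single u (1 : 𝕜) ⊗ₜ[𝕜] Pi.single v (1 : 𝕜)) =
        -(Pi.single u (1 : 𝕜) ⊗ₜ[𝕜] Pi.single v (1 : 𝕜))) :
    Rc ∘ₗ Rc = LinearMap.id := by
  have hbasis : ∀ u : P, (Pi.basisFun 𝕜 P) u = Pi.single u (1 : 𝕜) := by
    intro u; ext x; simp [Pi.basisFun_apply]
  apply Module.Basis.ext ((Pi.basisFun 𝕜 P).tensorProduct (Pi.basisFun 𝕜 P))
  rintro ⟨u, v⟩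
  rw [Module.Basis.tensorProduct_apply, hbasis, hbasis, LinearMap.comp_apply, LinearMap.id_apply]
  by_cases h : v ∈ σ u
  · -- main case
    obtain ⟨s, hs⟩ := (hi u v).mpr h
    -- the set A of pairs (z,w) with (z,w,s) ∈ T
    set A : Finset (P × P) := Finset.univ.filter (fun zw => (zw.1, zw.2, s) ∈ T) with hA
    have hmemA : ∀ zw : P × P, zw ∈ A ↔ (zw.1, zw.2, s) ∈ T := by
      intro zw; simp [hA]
    have huvA : (u, v) ∈ A := (hmemA _).mpr hs
    -- key formula for Rc on basis elements corresponding to A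
    have key : ∀ a b : P, (a, b, s) ∈ T →
        Rc (Pi.single a (1 : 𝕜) ⊗ₜ[𝕜] Pi.single b (1 : 𝕜)) =
          ∑ zw ∈ A.erase (a, b), Pi.single zw.1 (1 : 𝕜) ⊗ₜ[𝕜] Pi.single zw.2 (1 : 𝕜) := by
      intro a b hab
      have hb : b ∈ σ a := (hi a b).mp ⟨s, hab⟩
      rw [hRc₁ a b hb, ← Finset.sum_filter]
      congr 1
      ext zw
      simp only [Finset.mem_filter, Finset.mem_univ, true_and, Finset.mem_erase, hmemA]
      constructor
      · rintro ⟨hne, s', hs', hzw⟩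
        exact ⟨hne, by rwa [hiii a b s s' hab hs'] ⟩
      · rintro ⟨hne, hzw⟩
        exact ⟨hne, s, hab, hzw⟩
    rw [key u v hs, map_sum]
    have step : ∀ zw ∈ A.erase (u, v),
        Rc (Pi.single zw.1 (1 : 𝕜) ⊗ₜ[𝕜] Pi.single zw.2 (1 : 𝕜)) =
          (∑ b ∈ A, Pi.single b.1 (1 : 𝕜) ⊗ₜ[𝕜] Pi.single b.2 (1 : 𝕜))
            - Pi.single zw.1 (1 : 𝕜) ⊗ₜ[𝕜] Pi.single zw.2 (1 : 𝕜) := by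
      intro zw hzw
      have hzwA : zw ∈ A := Finset.mem_of_mem_erase hzw
      rw [key zw.1 zw.2 ((hmemA zw).mp hzwA)]
      rw [Finset.sum_erase_eq_sub]
      exact hzwA
    have hcardA : A.card = q + 1 := by
      have hbij : A.card = (Finset.univ.filter (fun w : P => s ∈ σ w)).card := by
        apply Finset.card_bij (fun zw _ => zw.2)
        · intro zw hzw
          simp only [Finset.mem_filter, Finset.mem_univ, true_and]
          exact (hi zw.2 s).mp ⟨_, hii _ _ _ ((hmemA zw).mp hzw)⟩
        · intro a ha b hb hab
          have ha' := (hmemA a).mp ha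
          have hb' := (hmemA b).mp hb
          have h1 : a.1 = b.1 := hiv a.1 b.1 a.2 s ha' (by rw [hab]; exact hb')
          exact Prod.ext h1 hab
        · intro w hw
          simp only [Finset.mem_filter, Finset.mem_univ, true_and] at hw
          obtain ⟨z, hz⟩ := (hi w s).mpr hw
          exact ⟨(z, w), (hmemA _).mpr (hii _ _ _ (hii _ _ _ hz)), rfl⟩
      rw [hbij, ← Fintype.card_subtype, Fintype.card_congr (σ.subtypeEquiv (fun w => Iff.rfl) :
        {w : P // s ∈ σ w} ≃ {l : L // s ∈ l}), ← Nat.card_eq_fintype_card]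
      rw [show Nat.card {l : L // s ∈ l} = Configuration.lineCount L s from rfl,
        Configuration.ProjectivePlane.lineCount_eq, hq]
    have hq1 : (q : 𝕜) = 1 := by
      have := (CharP.natCast_eq_natCast 𝕜 p).mpr hqp
      simpa using this
    rw [Finset.sum_congr rfl step, Finset.sum_sub_distrib, Finset.sum_const,
      Finset.card_erase_of_mem huvA, hcardA, Nat.add_sub_cancel,
      Finset.sum_erase_eq_sub huvA, ← Nat.cast_smul_eq_nsmul 𝕜, hq1, one_smul,
      sub_sub_cancel]
  · rw [hRc₂ u v h, map_neg, hRc₂ u v h, neg_neg]
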